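/- Let α ∈ (0,1], let Ω be a bounded open subset of ℝⁿ of class C^{1,α} with outward unit normal ν, and let T be an invertible real n×n matrix. Then the kernel (x,y) ↦ ((x−y)ᵗ·ν(y))/|T^{−1}(x−y)|^{n}, defined off the diagonal of ∂Ω×∂Ω, belongs to K_{n−1−α, n−α, 1}(∂Ω×∂Ω), and hence also to K_{n−1−α, n−1, α}(∂Ω×∂Ω). -/

import Mathlib

open Set Metric
open Topology
set_option maxHeartbeats 1000000

noncomputable section

abbrev Euc (n : ℕ) := EuclideanSpace ℝ (Fin n)

/-- The set of values `‖x-y‖^s * ‖K x y‖` over distinct points of `X × Y`. -/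
def kSet1 {n : ℕ} (X Y : Set (Euc n)) (s : ℝ) (K : Euc n → Euc n → ℂ) : Set ℝ :=
  {c | ∃ x ∈ X, ∃ y ∈ Y, x ≠ y ∧ c = ‖x - y‖ ^ s * ‖K x y‖}

/-- The set of values of the Hölder–type quotient of a kernel. -/
def kSet2 {n : ℕ} (X Y : Set (Euc n)) (s₂ s₃ : ℝ) (K : Euc n → Euc n → ℂ) : Set ℝ :=
  {c | ∃ x' ∈ X, ∃ x'' ∈ X, x' ≠ x'' ∧ ∃ y ∈ Y, 2 * ‖x' - x''‖ ≤ ‖x' - y‖ ∧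
       c = ‖x' - y‖ ^ s₂ / ‖x' - x''‖ ^ s₃ * ‖K x' y - K x'' y‖}

/-- Membership in the class `𝒦_{s₁,s₂,s₃}(X×Y)` of potential type kernels. -/
def memK {n : ℕ} (X Y : Set (Euc n)) (s₁ s₂ s₃ : ℝ) (K : Euc n → Euc n → ℂ) : Prop :=
  ContinuousOn (fun p : Euc n × Euc n => K p.1 p.2)
      ((X ×ˢ Y) \ {p : Euc n × Euc n | p.1 = p.2}) ∧
  BddAbove (kSet1 X Y s₁ K) ∧ BddAbove (kSet2 X Y s₂ s₃ K)

/-- The norm of the class `𝒦_{s₁,s₂,s₃}(X×Y)`. -/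
def kNorm {n : ℕ} (X Y : Set (Euc n)) (s₁ s₂ s₃ : ℝ) (K : Euc n → Euc n → ℂ) : ℝ :=
  sSup (kSet1 X Y s₁ K) + sSup (kSet2 X Y s₂ s₃ K)

/-- A bounded open subset of `ℝⁿ` of class `C^{1,α}`, together with its outward unit
normal field `ν`: near each boundary point, `Ω` is the sublevel set of a `C^{1,α}`
defining function with nonvanishing gradient, and `ν` is the normalized gradient. -/
def IsC1AlphaDomainWithNormal {n : ℕ} (α : ℝ) (Ω : Set (Euc n)) (ν : Euc n → Euc n) : Prop :=
  IsOpen Ω ∧ Bornology.IsBounded Ω ∧ Ω.Nonempty ∧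
  ∀ x ∈ frontier Ω, ∃ r > (0 : ℝ), ∃ f : Euc n → ℝ,
    ContDiffOn ℝ 1 f (ball x r) ∧
    (∃ c : ℝ, ∀ y ∈ ball x r, ∀ z ∈ ball x r,
        ‖fderiv ℝ f y - fderiv ℝ f z‖ ≤ c * ‖y - z‖ ^ α) ∧
    (∀ y ∈ ball x r, gradient f y ≠ 0) ∧
    Ω ∩ ball x r = {y | f y < 0} ∩ ball x r ∧
    ∀ y ∈ frontier Ω ∩ ball x r, ν y = ‖gradient f y‖⁻¹ • gradient f y

lemma my_abs_pow_sub_pow (a b : ℝ) (ha : 0 ≤ a) (hb : 0 ≤ b) (n : ℕ) :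
    |a ^ n - b ^ n| ≤ n * max a b ^ (n - 1) * |a - b| := by
  induction n with
  | zero => simp
  | succ k ih =>
    have key : a ^ (k+1) - b ^ (k+1) = a * (a ^ k - b ^ k) + (a - b) * b ^ k := by ring
    have h1 : |a ^ (k+1) - b ^ (k+1)| ≤ a * |a ^ k - b ^ k| + |a - b| * b ^ k := by
      rw [key]
      calc |a * (a ^ k - b ^ k) + (a - b) * b ^ k| ≤ |a * (a ^ k - b ^ k)| + |(a - b) * b ^ k| :=
            abs_add_le _ _
        _ = a * |a ^ k - b ^ k| + |a - b| * b ^ k := by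
            rw [abs_mul, abs_mul, abs_of_nonneg ha, abs_of_nonneg (pow_nonneg hb k)]
    have hm : 0 ≤ max a b := le_trans ha (le_max_left a b)
    have h2 : a * |a ^ k - b ^ k| ≤ k * max a b ^ k * |a - b| := by
      rcases Nat.eq_zero_or_pos k with hk | hk
      · simp [hk]
      · calc a * |a ^ k - b ^ k| ≤ a * (k * max a b ^ (k-1) * |a - b|) := by
              exact mul_le_mul_of_nonneg_left ih ha
          _ ≤ max a b * (k * max a b ^ (k-1) * |a - b|) := by
              apply mul_le_mul_of_nonneg_right (le_max_left a b)
              positivity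
          _ = k * (max a b * max a b ^ (k-1)) * |a - b| := by ring
          _ = k * max a b ^ k * |a - b| := by
              rw [← pow_succ']
              congr 3
              omega
    have h3 : |a - b| * b ^ k ≤ max a b ^ k * |a - b| := by
      rw [mul_comm]
      apply mul_le_mul_of_nonneg_right _ (abs_nonneg _)
      exact pow_le_pow_left₀ hb (le_max_right a b) k
    calc |a ^ (k+1) - b ^ (k+1)| ≤ a * |a ^ k - b ^ k| + |a - b| * b ^ k := h1
      _ ≤ k * max a b ^ k * |a - b| + max a b ^ k * |a - b| := add_le_add h2 h3
      _ = (k + 1 : ℕ) * max a b ^ ((k+1) - 1) * |a - b| := by push_cast; ring_nf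

lemma my_normalize_sub {E : Type*} [NormedAddCommGroup E] [NormedSpace ℝ E] {u v : E}
    (hu : u ≠ 0) (hv : v ≠ 0) :
    ‖‖u‖⁻¹ • u - ‖v‖⁻¹ • v‖ ≤ 2 * ‖u - v‖ / ‖u‖ := by
  have hu' : (0:ℝ) < ‖u‖ := norm_pos_iff.mpr hu
  have hv' : (0:ℝ) < ‖v‖ := norm_pos_iff.mpr hv
  have key : ‖u‖⁻¹ • u - ‖v‖⁻¹ • v = ‖u‖⁻¹ • (u - v) + (‖u‖⁻¹ - ‖v‖⁻¹) • v := by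
    rw [smul_sub, sub_smul]; abel
  rw [key]
  have h1 : ‖‖u‖⁻¹ • (u - v)‖ = ‖u - v‖ / ‖u‖ := by
    rw [norm_smul, norm_inv, norm_norm, div_eq_inv_mul]
  have h2 : ‖(‖u‖⁻¹ - ‖v‖⁻¹) • v‖ ≤ ‖u - v‖ / ‖u‖ := by
    rw [norm_smul, Real.norm_eq_abs]
    have e1 : ‖u‖⁻¹ - ‖v‖⁻¹ = (‖v‖ - ‖u‖) / (‖u‖ * ‖v‖) := by field_simp
    have e2 : |‖v‖ - ‖u‖| ≤ ‖u - v‖ := by rw [norm_sub_rev]; exact abs_norm_sub_norm_le v u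
    rw [e1, abs_div, abs_of_pos (mul_pos hu' hv')]
    calc |‖v‖ - ‖u‖| / (‖u‖ * ‖v‖) * ‖v‖ = |‖v‖ - ‖u‖| / ‖u‖ := by field_simp
      _ ≤ ‖u - v‖ / ‖u‖ := by gcongr
  calc ‖‖u‖⁻¹ • (u - v) + (‖u‖⁻¹ - ‖v‖⁻¹) • v‖ ≤ ‖‖u‖⁻¹ • (u - v)‖ + ‖(‖u‖⁻¹ - ‖v‖⁻¹) • v‖ :=
        norm_add_le _ _
    _ ≤ ‖u - v‖ / ‖u‖ + ‖u - v‖ / ‖u‖ := by rw [h1]; exact add_le_add le_rfl h2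
    _ = 2 * ‖u - v‖ / ‖u‖ := by ring

lemma seg_norm_le {E : Type*} [NormedAddCommGroup E] [NormedSpace ℝ E] {x y z : E}
    (hz : z ∈ segment ℝ y x) : ‖z - y‖ ≤ ‖x - y‖ := by
  obtain ⟨a, b, ha, hb, hab, hz⟩ := hz
  have hzy : z - y = b • (x - y) := by
    have ha' : a = 1 - b := by linarith
    subst ha'; rw [← hz]; module
  rw [hzy, norm_smul, Real.norm_eq_abs, abs_of_nonneg hb]
  have hb1 : b ≤ 1 := by linarith
  calc b * ‖x - y‖ ≤ 1 * ‖x - y‖ := by gcongr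
    _ = ‖x - y‖ := one_mul _

lemma local_est {n : ℕ} {α : ℝ} (hα : 0 < α) {Ω : Set (Euc n)} {ν : Euc n → Euc n}
    (hΩ : IsC1AlphaDomainWithNormal α Ω ν) {p : Euc n} (hp : p ∈ frontier Ω) :
    ∃ ρ > (0:ℝ), ∃ c ≥ (0:ℝ), ∀ x ∈ frontier Ω ∩ ball p ρ, ∀ y ∈ frontier Ω ∩ ball p ρ,
      |(inner ℝ (x - y) (ν y) : ℝ)| ≤ c * ‖x - y‖ ^ (1 + α) ∧
      ‖ν x - ν y‖ ≤ c * ‖x - y‖ ^ α := by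
  obtain ⟨hO, -, -, hbd⟩ := hΩ
  obtain ⟨r, hr, f, hf, ⟨c₀, hc₀⟩, hgrad, hsub, hν⟩ := hbd p hp
  set c₁ : ℝ := max c₀ 0 with hc₁def
  have hc₁ : 0 ≤ c₁ := le_max_right _ _
  have hc₀' : ∀ y ∈ ball p r, ∀ z ∈ ball p r,
      ‖fderiv ℝ f y - fderiv ℝ f z‖ ≤ c₁ * ‖y - z‖ ^ α := fun y hy z hz =>
    (hc₀ y hy z hz).trans (mul_le_mul_of_nonneg_right (le_max_left _ _) (by positivity))
  -- differentiability
  have hdiff : ∀ z ∈ ball p r, HasFDerivAt f (fderiv ℝ f z) z := fun z hz =>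
    ((hf.differentiableOn one_ne_zero z hz).differentiableAt (isOpen_ball.mem_nhds hz)).hasFDerivAt
  -- gradient is continuous on the ball
  have hgc : ContinuousOn (gradient f) (ball p r) := by
    have h1 := hf.continuousOn_fderiv_of_isOpen isOpen_ball le_rfl
    have : ContinuousOn (fun y => (InnerProductSpace.toDual ℝ (Euc n)).symm (fderiv ℝ f y))
        (ball p r) := ((InnerProductSpace.toDual ℝ (Euc n)).symm.continuous.comp_continuousOn h1)
    exact this
  -- lower bound on the gradient norm on the half ball
  have hhalf : closedBall p (r/2) ⊆ ball p r := by
    apply closedBall_subset_ball; linarith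
  obtain ⟨y₀, hy₀, hy₀min⟩ := (isCompact_closedBall p (r/2)).exists_isMinOn
    ⟨p, mem_closedBall_self (by linarith)⟩
    ((continuous_norm.comp_continuousOn (hgc.mono hhalf)))
  set m : ℝ := ‖gradient f y₀‖ with hmdef
  have hm : 0 < m := norm_pos_iff.mpr (hgrad y₀ (hhalf hy₀))
  have hmle : ∀ z ∈ closedBall p (r/2), m ≤ ‖gradient f z‖ := fun z hz => hy₀min hz
  -- f vanishes on the frontier inside the ball
  have hzero : ∀ y ∈ frontier Ω ∩ ball p r, f y = 0 := by
    rintro y ⟨hyΓ, hyb⟩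
    have hyΓ' : y ∈ closure Ω \ Ω := by rwa [← hO.frontier_eq]
    have h1 : 0 ≤ f y := by
      by_contra h
      push_neg at h
      have : y ∈ Ω ∩ ball p r := by
        rw [hsub]; exact ⟨h, hyb⟩
      exact hyΓ'.2 this.1
    have hycl : y ∈ closure (ball p r ∩ Ω) := by
      have := isOpen_ball.inter_closure (t := Ω) ⟨hyb, hyΓ'.1⟩
      exact this
    have hne : (𝓝[ball p r ∩ Ω] y).NeBot := mem_closure_iff_nhdsWithin_neBot.mp hycl
    have hcw : Filter.Tendsto f (𝓝[ball p r ∩ Ω] y) (𝓝 (f y)) :=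
      ((hf.continuousOn y hyb).mono inter_subset_left)
    have hle : ∀ z ∈ ball p r ∩ Ω, f z ≤ 0 := by
      rintro z ⟨hzb, hzΩ⟩
      have : z ∈ {y | f y < 0} ∩ ball p r := by rw [← hsub]; exact ⟨hzΩ, hzb⟩
      exact le_of_lt this.1
    have h2 : f y ≤ 0 := le_of_tendsto hcw (eventually_nhdsWithin_of_forall hle)
    linarith
  refine ⟨r/2, by linarith, max (m⁻¹ * c₁) (2 * c₁ / m),
    le_max_of_le_left (by positivity), ?_⟩
  rintro x ⟨hxΓ, hxb⟩ y ⟨hyΓ, hyb⟩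
  have hxb' : x ∈ ball p r := ball_subset_ball (by linarith) hxb
  have hyb' : y ∈ ball p r := ball_subset_ball (by linarith) hyb
  have hgx := hgrad x hxb'
  have hgy := hgrad y hyb'
  have hνx : ν x = ‖gradient f x‖⁻¹ • gradient f x := hν x ⟨hxΓ, hxb'⟩
  have hνy : ν y = ‖gradient f y‖⁻¹ • gradient f y := hν y ⟨hyΓ, hyb'⟩
  have hmy : m ≤ ‖gradient f y‖ := hmle y (ball_subset_closedBall hyb)
  have hmx : m ≤ ‖gradient f x‖ := hmle x (ball_subset_closedBall hxb)
  constructor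
  · -- Taylor estimate
    have hseg : segment ℝ y x ⊆ ball p (r/2) := (convex_ball p (r/2)).segment_subset hyb hxb
    have htay : ‖f x - f y - (fderiv ℝ f y) (x - y)‖ ≤ (c₁ * ‖x - y‖ ^ α) * ‖x - y‖ := by
      apply Convex.norm_image_sub_le_of_norm_hasFDerivWithin_le'
        (f' := fun z => fderiv ℝ f z) (φ := fderiv ℝ f y)
        (fun z hz => (hdiff z (ball_subset_ball (by linarith) (hseg hz))).hasFDerivWithinAt)
        (fun z hz => ?_) (convex_segment y x)
        (left_mem_segment ℝ y x) (right_mem_segment ℝ y x)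
      calc ‖fderiv ℝ f z - fderiv ℝ f y‖ ≤ c₁ * ‖z - y‖ ^ α :=
            hc₀' z (ball_subset_ball (by linarith) (hseg hz)) y hyb'
        _ ≤ c₁ * ‖x - y‖ ^ α :=
            mul_le_mul_of_nonneg_left
              (Real.rpow_le_rpow (norm_nonneg _) (seg_norm_le hz) hα.le) hc₁
    rw [hzero x ⟨hxΓ, hxb'⟩, hzero y ⟨hyΓ, hyb'⟩] at htay
    simp only [sub_zero, zero_sub, norm_neg] at htay
    have hinner : (inner ℝ (x - y) (ν y) : ℝ) = ‖gradient f y‖⁻¹ * (fderiv ℝ f y) (x - y) := by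
      rw [hνy, real_inner_smul_right, real_inner_comm]
      congr 1
      exact InnerProductSpace.toDual_symm_apply
    rw [hinner, abs_mul, abs_of_nonneg (by positivity : (0:ℝ) ≤ ‖gradient f y‖⁻¹)]
    calc ‖gradient f y‖⁻¹ * |(fderiv ℝ f y) (x - y)| ≤ m⁻¹ * (c₁ * ‖x - y‖ ^ α * ‖x - y‖) := by
          apply mul_le_mul (by rwa [inv_le_inv₀ (lt_of_lt_of_le hm hmy) hm]) ?_ (abs_nonneg _)
            (by positivity)
          exact htay
      _ = m⁻¹ * c₁ * ‖x - y‖ ^ (1 + α) := by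
          rw [Real.rpow_add' (norm_nonneg _) (by positivity), Real.rpow_one]; ring
      _ ≤ max (m⁻¹ * c₁) (2 * c₁ / m) * ‖x - y‖ ^ (1 + α) := by
          gcongr; exact le_max_left _ _
  · -- Hölder continuity of ν
    rw [hνx, hνy]
    have hgdiff : ‖gradient f x - gradient f y‖ ≤ c₁ * ‖x - y‖ ^ α := by
      have e : gradient f x - gradient f y =
          (InnerProductSpace.toDual ℝ (Euc n)).symm (fderiv ℝ f x - fderiv ℝ f y) := by
        rw [map_sub]; rfl
      rw [e, LinearIsometryEquiv.norm_map]
      exact hc₀' x hxb' y hyb'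
    calc ‖‖gradient f x‖⁻¹ • gradient f x - ‖gradient f y‖⁻¹ • gradient f y‖
        ≤ 2 * ‖gradient f x - gradient f y‖ / ‖gradient f x‖ := my_normalize_sub hgx hgy
      _ ≤ 2 * (c₁ * ‖x - y‖ ^ α) / m := by
          apply div_le_div₀ (by positivity) (by linarith [hgdiff]) hm hmx
      _ = 2 * c₁ / m * ‖x - y‖ ^ α := by ring
      _ ≤ max (m⁻¹ * c₁) (2 * c₁ / m) * ‖x - y‖ ^ α := by
          gcongr; exact le_max_right _ _

lemma nu_unit {n : ℕ} {α : ℝ} {Ω : Set (Euc n)} {ν : Euc n → Euc n}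
    (hΩ : IsC1AlphaDomainWithNormal α Ω ν) {y : Euc n} (hy : y ∈ frontier Ω) : ‖ν y‖ = 1 := by
  obtain ⟨r, hr, f, -, -, hgrad, -, hν⟩ := hΩ.2.2.2 y hy
  have hyb : y ∈ ball y r := mem_ball_self hr
  rw [hν y ⟨hy, hyb⟩, norm_smul, norm_inv, norm_norm,
    inv_mul_cancel₀ (norm_ne_zero_iff.mpr (hgrad y hyb))]

lemma global_est {n : ℕ} {α : ℝ} (hα : 0 < α) {Ω : Set (Euc n)} {ν : Euc n → Euc n}
    (hΩ : IsC1AlphaDomainWithNormal α Ω ν) :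
    ∃ C > (0:ℝ), ∀ x ∈ frontier Ω, ∀ y ∈ frontier Ω,
      |(inner ℝ (x - y) (ν y) : ℝ)| ≤ C * ‖x - y‖ ^ (1 + α) ∧
      ‖ν x - ν y‖ ≤ C * ‖x - y‖ ^ α := by
  rcases (frontier Ω).eq_empty_or_nonempty with hΓ | hΓ
  · exact ⟨1, one_pos, by simp [hΓ]⟩
  have hcomp : IsCompact (frontier Ω) :=
    isCompact_of_isClosed_isBounded isClosed_frontier
      (hΩ.2.1.closure.subset (frontier_subset_closure))
  -- choose local data
  have hloc := fun (q : frontier Ω) => local_est hα hΩ q.2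
  choose ρ hρ c hc H using hloc
  -- finite subcover with half radii
  obtain ⟨t, ht⟩ := hcomp.elim_finite_subcover (fun q : frontier Ω => ball q.1 (ρ q / 2))
    (fun q => isOpen_ball) (fun x hx => mem_iUnion.mpr ⟨⟨x, hx⟩, mem_ball_self (by linarith [hρ ⟨x, hx⟩])⟩)
  have htne : t.Nonempty := by
    obtain ⟨x, hx⟩ := hΓ
    obtain ⟨q, hq⟩ := mem_iUnion.mp (ht hx)
    simp only [mem_iUnion, exists_prop] at hq
    exact ⟨q, hq.1⟩
  set δ : ℝ := t.inf' htne (fun q => ρ q / 2) with hδdef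
  have hδ : 0 < δ := by
    rw [hδdef, Finset.lt_inf'_iff]
    exact fun q _ => by linarith [hρ q]
  set c₂ : ℝ := t.sup' htne c with hc₂def
  set C : ℝ := max c₂ (2 * δ ^ (-α)) + 1 with hCdef
  have hδα : 0 < δ ^ (-α) := Real.rpow_pos_of_pos hδ _
  have hC : 0 < C := by
    have h1 : (0:ℝ) ≤ max c₂ (2 * δ ^ (-α)) := le_max_of_le_right (by positivity)
    linarith
  refine ⟨C, hC, fun x hx y hy => ?_⟩
  have hCge : 2 * δ ^ (-α) ≤ C := by
    have := le_max_right c₂ (2 * δ ^ (-α)); linarith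
  rcases lt_or_ge ‖x - y‖ δ with hnear | hfar
  · -- near case: both points in one chart
    obtain ⟨q, hq⟩ := mem_iUnion.mp (ht hx)
    simp only [mem_iUnion, exists_prop] at hq
    obtain ⟨hqt, hxq⟩ := hq
    have hδq : δ ≤ ρ q / 2 := Finset.inf'_le _ hqt
    have hxq' : x ∈ ball q.1 (ρ q) := ball_subset_ball (by linarith [hρ q]) hxq
    have hyq : y ∈ ball q.1 (ρ q) := by
      rw [mem_ball] at hxq ⊢
      have : dist y x < δ := by rw [dist_eq_norm, norm_sub_rev]; exact hnear
      calc dist y q.1 ≤ dist y x + dist x q.1 := dist_triangle _ _ _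
        _ < δ + ρ q / 2 := by linarith
        _ ≤ ρ q := by linarith
    have hcC : c q ≤ C := by
      have h1 : c q ≤ c₂ := Finset.le_sup' c hqt
      have h2 : c₂ ≤ max c₂ (2 * δ ^ (-α)) := le_max_left _ _
      linarith
    obtain ⟨h1, h2⟩ := H q x ⟨hx, hxq'⟩ y ⟨hy, hyq⟩
    exact ⟨h1.trans (mul_le_mul_of_nonneg_right hcC (by positivity)),
      h2.trans (mul_le_mul_of_nonneg_right hcC (by positivity))⟩
  · -- far case: trivial bound
    have hd : 0 < ‖x - y‖ := lt_of_lt_of_le hδ hfar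
    have hpow : δ ^ (-α) * ‖x - y‖ ^ α ≥ 1 := by
      have h1 : δ ^ α ≤ ‖x - y‖ ^ α := Real.rpow_le_rpow hδ.le hfar hα.le
      have h2 : δ ^ (-α) * δ ^ α = 1 := by
        rw [← Real.rpow_add hδ]; simp
      nlinarith [Real.rpow_pos_of_pos hδ α]
    constructor
    · have hb : |(inner ℝ (x - y) (ν y) : ℝ)| ≤ ‖x - y‖ := by
        calc |(inner ℝ (x - y) (ν y) : ℝ)| ≤ ‖x - y‖ * ‖ν y‖ := abs_real_inner_le_norm _ _
          _ = ‖x - y‖ := by rw [nu_unit hΩ hy, mul_one]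
      have key : ‖x - y‖ ≤ C * ‖x - y‖ ^ (1 + α) := by
        have e1 : ‖x - y‖ ^ (1 + α) = ‖x - y‖ * ‖x - y‖ ^ α := by
          rw [Real.rpow_add hd, Real.rpow_one]
        have e2 : ‖x - y‖ ^ (-α) ≤ δ ^ (-α) :=
          Real.rpow_le_rpow_of_nonpos hδ hfar (by linarith)
        have e3 : 1 ≤ δ ^ (-α) * ‖x - y‖ ^ α := hpow
        calc ‖x - y‖ = 1 * ‖x - y‖ := (one_mul _).symm
          _ ≤ (δ ^ (-α) * ‖x - y‖ ^ α) * ‖x - y‖ := by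
              apply mul_le_mul_of_nonneg_right e3 hd.le
          _ = δ ^ (-α) * ‖x - y‖ ^ (1 + α) := by rw [e1]; ring
          _ ≤ C * ‖x - y‖ ^ (1 + α) := by
              apply mul_le_mul_of_nonneg_right _ (by positivity)
              linarith
      exact hb.trans key
    · calc ‖ν x - ν y‖ ≤ ‖ν x‖ + ‖ν y‖ := norm_sub_le _ _
        _ = 2 := by rw [nu_unit hΩ hx, nu_unit hΩ hy]; norm_num
        _ = 2 * 1 := (mul_one 2).symm
        _ ≤ 2 * (δ ^ (-α) * ‖x - y‖ ^ α) := by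
            apply mul_le_mul_of_nonneg_left hpow (by norm_num)
        _ = 2 * δ ^ (-α) * ‖x - y‖ ^ α := by ring
        _ ≤ C * ‖x - y‖ ^ α := by
            apply mul_le_mul_of_nonneg_right hCge (by positivity)

lemma nu_cont {n : ℕ} {α : ℝ} (hα : 0 < α) {Ω : Set (Euc n)} {ν : Euc n → Euc n}
    (hΩ : IsC1AlphaDomainWithNormal α Ω ν) : ContinuousOn ν (frontier Ω) := by
  obtain ⟨C, hC, H⟩ := global_est hα hΩ
  intro x hx
  rw [ContinuousWithinAt, tendsto_iff_dist_tendsto_zero]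
  have h1 : Filter.Tendsto (fun y : Euc n => ‖y - x‖) (𝓝[frontier Ω] x) (𝓝 0) := by
    have h0 : Filter.Tendsto (fun y : Euc n => ‖y - x‖) (𝓝 x) (𝓝 ‖x - x‖) :=
      ((continuous_id.sub continuous_const).norm).tendsto x
    simp only [sub_self, norm_zero] at h0
    exact h0.mono_left nhdsWithin_le_nhds
  have h2 : Filter.Tendsto (fun d : ℝ => C * d ^ α) (𝓝 0) (𝓝 0) := by
    have h3 := (Real.continuousAt_rpow_const 0 α (Or.inr hα.le)).tendsto
    rw [Real.zero_rpow hα.ne'] at h3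
    have := h3.const_mul C
    simpa using this
  apply squeeze_zero' (Filter.Eventually.of_forall fun y => dist_nonneg)
    (eventually_nhdsWithin_of_forall fun y hy => ?_) (h2.comp h1)
  calc dist (ν y) (ν x) = ‖ν y - ν x‖ := dist_eq_norm _ _
    _ ≤ C * ‖y - x‖ ^ α := (H y hy x hx).2

lemma lin_bounds {n : ℕ} (T : Euc n ≃ₗ[ℝ] Euc n) :
    ∃ m M : ℝ, 0 < m ∧ 0 < M ∧ ∀ v : Euc n, m * ‖v‖ ≤ ‖T.symm v‖ ∧ ‖T.symm v‖ ≤ M * ‖v‖ := by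
  set S : Euc n →L[ℝ] Euc n := LinearMap.toContinuousLinearMap (T.symm : Euc n →ₗ[ℝ] Euc n)
  set S' : Euc n →L[ℝ] Euc n := LinearMap.toContinuousLinearMap (T : Euc n →ₗ[ℝ] Euc n)
  refine ⟨(‖S'‖ + 1)⁻¹, ‖S‖ + 1, by positivity, by positivity, fun v => ?_⟩
  have hS : S v = T.symm v := rfl
  constructor
  · have h1 : ‖v‖ = ‖S' (T.symm v)‖ := by
      have : S' (T.symm v) = T (T.symm v) := rfl
      rw [this, T.apply_symm_apply]
    have h2 : ‖S' (T.symm v)‖ ≤ ‖S'‖ * ‖T.symm v‖ := S'.le_opNorm _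
    have h3 : ‖S'‖ * ‖T.symm v‖ ≤ (‖S'‖ + 1) * ‖T.symm v‖ := by
      apply mul_le_mul_of_nonneg_right (by linarith) (norm_nonneg _)
    rw [inv_mul_le_iff₀ (by positivity)]
    calc ‖v‖ = ‖S' (T.symm v)‖ := h1
      _ ≤ (‖S'‖ + 1) * ‖T.symm v‖ := le_trans h2 h3
  · calc ‖T.symm v‖ = ‖S v‖ := by rw [hS]
      _ ≤ ‖S‖ * ‖v‖ := S.le_opNorm _
      _ ≤ (‖S‖ + 1) * ‖v‖ := by
          apply mul_le_mul_of_nonneg_right (by linarith) (norm_nonneg _)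

lemma ker_est {n : ℕ} {α : ℝ} (hα : 0 < α) {Ω : Set (Euc n)} {ν : Euc n → Euc n}
    (hΩ : IsC1AlphaDomainWithNormal α Ω ν) (T : Euc n ≃ₗ[ℝ] Euc n) :
    ∃ C > (0:ℝ), ∀ x ∈ frontier Ω, ∀ y ∈ frontier Ω, x ≠ y →
      ‖((inner ℝ (x - y) (ν y) : ℝ) : ℂ) / ((‖T.symm (x - y)‖ ^ n : ℝ) : ℂ)‖ ≤
        C * ‖x - y‖ ^ (1 + α - (n:ℝ)) := by
  obtain ⟨C₁, hC₁, H⟩ := global_est hα hΩ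
  obtain ⟨m, M, hm, hM, hT⟩ := lin_bounds T
  refine ⟨C₁ / m ^ n, by positivity, fun x hx y hy hne => ?_⟩
  have hd : (0:ℝ) < ‖x - y‖ := norm_pos_iff.mpr (sub_ne_zero.mpr hne)
  set d : ℝ := ‖x - y‖ with hddef
  have ha : m * d ≤ ‖T.symm (x - y)‖ := (hT (x - y)).1
  have hD : (0:ℝ) < ‖T.symm (x - y)‖ ^ n := by
    apply pow_pos (lt_of_lt_of_le (by positivity) ha)
  have hDge : (m * d) ^ n ≤ ‖T.symm (x - y)‖ ^ n :=
    pow_le_pow_left₀ (by positivity) ha n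
  have hnorm : ‖((inner ℝ (x - y) (ν y) : ℝ) : ℂ) / ((‖T.symm (x - y)‖ ^ n : ℝ) : ℂ)‖ =
      |(inner ℝ (x - y) (ν y) : ℝ)| / |(‖T.symm (x - y)‖ ^ n : ℝ)| := by
    rw [norm_div, Complex.norm_real, Complex.norm_real, Real.norm_eq_abs, Real.norm_eq_abs]
  rw [hnorm, abs_of_pos hD]
  calc |(inner ℝ (x - y) (ν y) : ℝ)| / ‖T.symm (x - y)‖ ^ n
      ≤ (C₁ * d ^ (1 + α)) / ((m * d) ^ n) := by
        apply div_le_div₀ (by positivity) (H x hx y hy).1 (by positivity) hDge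
    _ = C₁ / m ^ n * d ^ (1 + α - (n:ℝ)) := by
        rw [mul_pow, Real.rpow_sub hd, ← Real.rpow_natCast d n]
        field_simp
    _ = C₁ / m ^ n * ‖x - y‖ ^ (1 + α - (n:ℝ)) := rfl

lemma diff_est {n : ℕ} {α : ℝ} (hα : α ∈ Ioc (0:ℝ) 1) {Ω : Set (Euc n)} {ν : Euc n → Euc n}
    (hΩ : IsC1AlphaDomainWithNormal α Ω ν) (T : Euc n ≃ₗ[ℝ] Euc n) :
    ∃ C > (0:ℝ), ∀ x' ∈ frontier Ω, ∀ x'' ∈ frontier Ω, x' ≠ x'' → ∀ y ∈ frontier Ω,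
      2 * ‖x' - x''‖ ≤ ‖x' - y‖ →
      ‖((inner ℝ (x' - y) (ν y) : ℝ) : ℂ) / ((‖T.symm (x' - y)‖ ^ n : ℝ) : ℂ) -
        ((inner ℝ (x'' - y) (ν y) : ℝ) : ℂ) / ((‖T.symm (x'' - y)‖ ^ n : ℝ) : ℂ)‖ ≤
        C * ‖x' - x''‖ * ‖x' - y‖ ^ (α - (n:ℝ)) := by
  obtain ⟨C₁, hC₁, H⟩ := global_est hα.1 hΩ
  obtain ⟨m, M, hm, hM, hT⟩ := lin_bounds T
  set C₂ : ℝ := 2 * C₁ / m ^ n with hC₂def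
  set C₃ : ℝ := 4 * C₁ * n * M * (2 * M) ^ (n - 1) / (m ^ n * (m / 2) ^ n) with hC₃def
  have hC₂ : 0 < C₂ := by positivity
  have hC₃ : 0 ≤ C₃ := by positivity
  refine ⟨C₂ + C₃, by linarith, fun x' hx' x'' hx'' hne y hy hsep => ?_⟩
  have ht : (0:ℝ) < ‖x' - x''‖ := norm_pos_iff.mpr (sub_ne_zero.mpr hne)
  set t : ℝ := ‖x' - x''‖ with htdef
  have hd : (0:ℝ) < ‖x' - y‖ := lt_of_lt_of_le (by linarith) hsep
  set d : ℝ := ‖x' - y‖ with hddef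
  set e : ℝ := ‖x'' - y‖ with hedef
  have he1 : d / 2 ≤ e := by
    have htri : d ≤ t + e := by
      calc d = ‖(x' - x'') + (x'' - y)‖ := by rw [hddef]; congr 1; abel
        _ ≤ t + e := norm_add_le _ _
    linarith
  have he2 : e ≤ 3 / 2 * d := by
    have htri : e ≤ t + d := by
      calc e = ‖(x'' - x') + (x' - y)‖ := by rw [hedef]; congr 1; abel
        _ ≤ ‖x'' - x'‖ + d := norm_add_le _ _
        _ = t + d := by rw [norm_sub_rev]
    linarith
  have he0 : (0:ℝ) < e := by linarith
  set a : ℝ := ‖T.symm (x' - y)‖ with hadef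
  set b : ℝ := ‖T.symm (x'' - y)‖ with hbdef
  have ha1 : m * d ≤ a := (hT (x' - y)).1
  have ha2 : a ≤ M * d := (hT (x' - y)).2
  have hb1 : m * e ≤ b := (hT (x'' - y)).1
  have hb2 : b ≤ M * e := (hT (x'' - y)).2
  have ha0 : 0 < a := lt_of_lt_of_le (by positivity) ha1
  have hb0 : 0 < b := lt_of_lt_of_le (by positivity) hb1
  have hb1' : m * (d / 2) ≤ b := le_trans (by nlinarith) hb1
  have hb2' : b ≤ 2 * M * d := le_trans hb2 (by nlinarith)
  have ha2' : a ≤ 2 * M * d := le_trans ha2 (by nlinarith)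
  have hab : |a - b| ≤ M * t := by
    have h1 : |a - b| ≤ ‖T.symm (x' - y) - T.symm (x'' - y)‖ := abs_norm_sub_norm_le _ _
    have h2 : T.symm (x' - y) - T.symm (x'' - y) = T.symm (x' - x'') := by
      rw [← map_sub]; congr 1; abel
    rw [h2] at h1
    exact h1.trans (hT (x' - x'')).2
  set A' : ℝ := (inner ℝ (x' - y) (ν y) : ℝ) with hA'def
  set A'' : ℝ := (inner ℝ (x'' - y) (ν y) : ℝ) with hA''def
  set D' : ℝ := a ^ n with hD'def
  set D'' : ℝ := b ^ n with hD''def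
  have hD'0 : 0 < D' := pow_pos ha0 n
  have hD''0 : 0 < D'' := pow_pos hb0 n
  -- numerator difference bound
  have hAd : |A' - A''| ≤ 2 * C₁ * t * d ^ α := by
    have e1 : A' - A'' = (inner ℝ (x' - x'') (ν y) : ℝ) := by
      rw [hA'def, hA''def, ← inner_sub_left]; congr 1; abel
    have e2 : (inner ℝ (x' - x'') (ν y) : ℝ) =
        (inner ℝ (x' - x'') (ν x') : ℝ) + (inner ℝ (x' - x'') (ν y - ν x') : ℝ) := by
      rw [← inner_add_right]; congr 1; abel
    have h3 : |(inner ℝ (x' - x'') (ν x') : ℝ)| ≤ C₁ * t ^ (1 + α) := by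
      have := (H x'' hx'' x' hx').1
      rw [show x'' - x' = -(x' - x'') by abel, inner_neg_left, abs_neg, norm_neg] at this
      exact this
    have h4 : |(inner ℝ (x' - x'') (ν y - ν x') : ℝ)| ≤ t * (C₁ * d ^ α) := by
      calc |(inner ℝ (x' - x'') (ν y - ν x') : ℝ)| ≤ ‖x' - x''‖ * ‖ν y - ν x'‖ :=
            abs_real_inner_le_norm _ _
        _ ≤ t * (C₁ * d ^ α) := by
            apply mul_le_mul_of_nonneg_left _ (norm_nonneg _)
            calc ‖ν y - ν x'‖ ≤ C₁ * ‖y - x'‖ ^ α := (H y hy x' hx').2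
              _ = C₁ * d ^ α := by rw [norm_sub_rev]
    have h5 : t ^ (1 + α) ≤ t * d ^ α := by
      rw [Real.rpow_add' ht.le (ne_of_gt (by linarith [hα.1])), Real.rpow_one]
      apply mul_le_mul_of_nonneg_left _ ht.le
      exact Real.rpow_le_rpow ht.le (by linarith) hα.1.le
    calc |A' - A''| ≤ |(inner ℝ (x' - x'') (ν x') : ℝ)| + |(inner ℝ (x' - x'') (ν y - ν x') : ℝ)| := by
          rw [e1, e2]; exact abs_add_le _ _
      _ ≤ C₁ * (t * d ^ α) + t * (C₁ * d ^ α) := by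
          apply add_le_add _ h4
          exact h3.trans (mul_le_mul_of_nonneg_left h5 hC₁.le)
      _ = 2 * C₁ * t * d ^ α := by ring
  -- split the difference
  have hsplit : A' / D' - A'' / D'' = (A' - A'') / D' + A'' * (D'' - D') / (D' * D'') := by
    field_simp
    ring
  have hcast : ‖((A' : ℝ) : ℂ) / ((D' : ℝ) : ℂ) - ((A'' : ℝ) : ℂ) / ((D'' : ℝ) : ℂ)‖ =
      |A' / D' - A'' / D''| := by
    rw [← Complex.ofReal_div, ← Complex.ofReal_div, ← Complex.ofReal_sub, Complex.norm_real,
      Real.norm_eq_abs]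
  rw [hcast, hsplit]
  have hterm1 : |(A' - A'') / D'| ≤ C₂ * t * d ^ (α - (n:ℝ)) := by
    rw [abs_div, abs_of_pos hD'0]
    have hD'ge : (m * d) ^ n ≤ D' := pow_le_pow_left₀ (by positivity) ha1 n
    calc |A' - A''| / D' ≤ (2 * C₁ * t * d ^ α) / ((m * d) ^ n) :=
          div_le_div₀ (by positivity) hAd (by positivity) hD'ge
      _ = C₂ * t * d ^ (α - (n:ℝ)) := by
          rw [mul_pow, Real.rpow_sub hd, ← Real.rpow_natCast d n, hC₂def]
          field_simp
  have hterm2 : |A'' * (D'' - D') / (D' * D'')| ≤ C₃ * t * d ^ (α - (n:ℝ)) := by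
    rcases Nat.eq_zero_or_pos n with hn | hn
    · subst hn
      have : x' = x'' := Subsingleton.elim x' x''
      exact absurd this hne
    · have hA'' : |A''| ≤ 4 * C₁ * d ^ (1 + α) := by
        have h1 : |A''| ≤ C₁ * e ^ (1 + α) := (H x'' hx'' y hy).1
        have h2 : e ^ (1 + α) ≤ 4 * d ^ (1 + α) := by
          have h3 : e ≤ 2 * d := by linarith
          have h4 : e ^ (1 + α) ≤ (2 * d) ^ (1 + α) :=
            Real.rpow_le_rpow he0.le h3 (by linarith [hα.1])
          have h5 : (2 * d) ^ (1 + α) = 2 ^ (1 + α) * d ^ (1 + α) :=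
            Real.mul_rpow (by norm_num) hd.le
          have h6 : (2:ℝ) ^ (1 + α) ≤ 2 ^ (2:ℝ) :=
            Real.rpow_le_rpow_of_exponent_le (by norm_num) (by linarith [hα.2])
          have h7 : (2:ℝ) ^ (2:ℝ) = 4 := by
            rw [show (2:ℝ) = ((2:ℕ):ℝ) by norm_num, Real.rpow_natCast]; norm_num
          nlinarith [Real.rpow_nonneg hd.le (1 + α)]
        calc |A''| ≤ C₁ * e ^ (1 + α) := h1
          _ ≤ C₁ * (4 * d ^ (1 + α)) := mul_le_mul_of_nonneg_left h2 hC₁.le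
          _ = 4 * C₁ * d ^ (1 + α) := by ring
      have hDD : |D'' - D'| ≤ n * (2 * M * d) ^ (n - 1) * (M * t) := by
        have h1 := my_abs_pow_sub_pow b a hb0.le ha0.le n
        have h2 : max b a ≤ 2 * M * d := max_le hb2' ha2'
        have h3 : |b - a| ≤ M * t := by rw [abs_sub_comm]; exact hab
        calc |D'' - D'| = |b ^ n - a ^ n| := rfl
          _ ≤ n * max b a ^ (n - 1) * |b - a| := h1
          _ ≤ n * (2 * M * d) ^ (n - 1) * (M * t) := by
              apply mul_le_mul _ h3 (abs_nonneg _) (by positivity)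
              apply mul_le_mul_of_nonneg_left _ (Nat.cast_nonneg n)
              exact pow_le_pow_left₀ (le_trans hb0.le (le_max_left b a)) h2 _
      have hDDge : (m * d) ^ n * (m * (d / 2)) ^ n ≤ D' * D'' := by
        apply mul_le_mul (pow_le_pow_left₀ (by positivity) ha1 n)
          (pow_le_pow_left₀ (by positivity) hb1' n) (by positivity) hD'0.le
      rw [abs_div, abs_mul, abs_of_pos (mul_pos hD'0 hD''0)]
      calc |A''| * |D'' - D'| / (D' * D'') ≤
          (4 * C₁ * d ^ (1 + α)) * (n * (2 * M * d) ^ (n - 1) * (M * t)) /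
            ((m * d) ^ n * (m * (d / 2)) ^ n) := by
            apply div_le_div₀ (by positivity)
              (mul_le_mul hA'' hDD (abs_nonneg _) (by positivity)) (by positivity) hDDge
        _ = C₃ * t * d ^ (α - (n:ℝ)) := by
            have hd1 : d ^ (n - 1) = d ^ (((n:ℝ)) - 1) := by
              rw [← Real.rpow_natCast d (n - 1), Nat.cast_sub hn]
              norm_num
            have hd2 : (d:ℝ) ^ n = d ^ ((n:ℝ)) := by rw [← Real.rpow_natCast d n]
            have key : d ^ (α - (n:ℝ)) = d ^ (1 + α) * d ^ ((n:ℝ) - 1) / (d ^ ((n:ℝ)) * d ^ ((n:ℝ))) := by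
              rw [← Real.rpow_add hd, ← Real.rpow_add hd, ← Real.rpow_sub hd]
              congr 1; ring
            have e0 : (m * (d / 2)) ^ n = (m / 2) ^ n * d ^ n := by
              rw [show m * (d/2) = (m/2)*d by ring, mul_pow]
            have h1 : (m:ℝ) ^ n ≠ 0 := by positivity
            have h2 : ((m/2):ℝ) ^ n ≠ 0 := by positivity
            have h3 : d ^ ((n:ℝ)) ≠ 0 := (Real.rpow_pos_of_pos hd _).ne'
            rw [e0, mul_pow (2*M) d, hC₃def, hd1, hd2, key]
            field_simp
            ring_nf
            rw [hd2]; ring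
  calc |((A' - A'') / D' + A'' * (D'' - D') / (D' * D''))|
      ≤ |(A' - A'') / D'| + |A'' * (D'' - D') / (D' * D'')| := abs_add_le _ _
    _ ≤ C₂ * t * d ^ (α - (n:ℝ)) + C₃ * t * d ^ (α - (n:ℝ)) := add_le_add hterm1 hterm2
    _ = (C₂ + C₃) * t * d ^ (α - (n:ℝ)) := by ring

lemma cont_part {n : ℕ} {α : ℝ} (hα : 0 < α) {Ω : Set (Euc n)} {ν : Euc n → Euc n}
    (hΩ : IsC1AlphaDomainWithNormal α Ω ν) (T : Euc n ≃ₗ[ℝ] Euc n) :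
    ContinuousOn (fun p : Euc n × Euc n =>
      ((inner ℝ (p.1 - p.2) (ν p.2) : ℝ) : ℂ) / ((‖T.symm (p.1 - p.2)‖ ^ n : ℝ) : ℂ))
      ((frontier Ω ×ˢ frontier Ω) \ {p : Euc n × Euc n | p.1 = p.2}) := by
  have hTc : Continuous fun p : Euc n × Euc n => T.symm (p.1 - p.2) := by
    exact (LinearMap.toContinuousLinearMap (T.symm : Euc n →ₗ[ℝ] Euc n)).continuous.comp
      (continuous_fst.sub continuous_snd)
  apply ContinuousOn.div
  · apply Complex.continuous_ofReal.comp_continuousOn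
    apply ContinuousOn.inner
    · exact (continuous_fst.sub continuous_snd).continuousOn
    · exact (nu_cont hα hΩ).comp continuous_snd.continuousOn (fun p hp => hp.1.2)
  · exact (Complex.continuous_ofReal.comp (hTc.norm.pow n)).continuousOn
  · intro p hp
    have hne : p.1 ≠ p.2 := hp.2
    have h0 : T.symm (p.1 - p.2) ≠ 0 := by
      intro h
      exact hne (sub_eq_zero.mp (by simpa using (LinearEquiv.map_eq_zero_iff T.symm).mp h))
    exact Complex.ofReal_ne_zero.mpr (ne_of_gt (pow_pos (norm_pos_iff.mpr h0) n))


/-- If `α ∈ (0,1]`, `Ω ⊆ ℝⁿ` is a bounded open set of class `C^{1,α}` with outward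
unit normal `ν` and `T` is an invertible real `n×n` matrix, then the kernel
`((x-y)ᵗ·ν(y))/|T⁻¹(x-y)|ⁿ` belongs to `𝒦_{n-1-α,n-α,1}(∂Ω×∂Ω)` and hence also to
`𝒦_{n-1-α,n-1,α}(∂Ω×∂Ω)`. -/
theorem stmt_19 {n : ℕ} (α : ℝ) (hα : α ∈ Ioc (0 : ℝ) 1)
    (Ω : Set (Euc n)) (ν : Euc n → Euc n)
    (hΩ : IsC1AlphaDomainWithNormal α Ω ν)
    (T : Euc n ≃ₗ[ℝ] Euc n) :
    memK (frontier Ω) (frontier Ω) ((n : ℝ) - 1 - α) ((n : ℝ) - α) 1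
      (fun x y => ((inner ℝ (x - y) (ν y) : ℝ) : ℂ) / ((‖T.symm (x - y)‖ ^ n : ℝ) : ℂ)) ∧
    memK (frontier Ω) (frontier Ω) ((n : ℝ) - 1 - α) ((n : ℝ) - 1) α
      (fun x y => ((inner ℝ (x - y) (ν y) : ℝ) : ℂ) / ((‖T.symm (x - y)‖ ^ n : ℝ) : ℂ)) := by
  have hcont := cont_part hα.1 hΩ T
  obtain ⟨C₁, hC₁, H₁⟩ := ker_est hα.1 hΩ T
  obtain ⟨C₂, hC₂, H₂⟩ := diff_est hα hΩ T
  have hb1 : BddAbove (kSet1 (frontier Ω) (frontier Ω) ((n:ℝ) - 1 - α)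
      (fun x y => ((inner ℝ (x - y) (ν y) : ℝ) : ℂ) / ((‖T.symm (x - y)‖ ^ n : ℝ) : ℂ))) := by
    refine ⟨C₁, ?_⟩
    rintro c ⟨x, hx, y, hy, hne, rfl⟩
    have hd : (0:ℝ) < ‖x - y‖ := norm_pos_iff.mpr (sub_ne_zero.mpr hne)
    have e1 : ‖x - y‖ ^ ((n:ℝ) - 1 - α) * ‖x - y‖ ^ (1 + α - (n:ℝ)) = 1 := by
      rw [← Real.rpow_add hd, show (n:ℝ) - 1 - α + (1 + α - (n:ℝ)) = 0 by ring, Real.rpow_zero]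
    calc ‖x - y‖ ^ ((n:ℝ) - 1 - α) *
          ‖((inner ℝ (x - y) (ν y) : ℝ) : ℂ) / ((‖T.symm (x - y)‖ ^ n : ℝ) : ℂ)‖
        ≤ ‖x - y‖ ^ ((n:ℝ) - 1 - α) * (C₁ * ‖x - y‖ ^ (1 + α - (n:ℝ))) :=
          mul_le_mul_of_nonneg_left (H₁ x hx y hy hne) (by positivity)
      _ = C₁ * (‖x - y‖ ^ ((n:ℝ) - 1 - α) * ‖x - y‖ ^ (1 + α - (n:ℝ))) := by ring
      _ = C₁ := by rw [e1, mul_one]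
  have hb2a : BddAbove (kSet2 (frontier Ω) (frontier Ω) ((n:ℝ) - α) 1
      (fun x y => ((inner ℝ (x - y) (ν y) : ℝ) : ℂ) / ((‖T.symm (x - y)‖ ^ n : ℝ) : ℂ))) := by
    refine ⟨C₂, ?_⟩
    rintro c ⟨x', hx', x'', hx'', hne, y, hy, hsep, rfl⟩
    have ht : (0:ℝ) < ‖x' - x''‖ := norm_pos_iff.mpr (sub_ne_zero.mpr hne)
    have hd : (0:ℝ) < ‖x' - y‖ := lt_of_lt_of_le (by linarith) hsep
    have e1 : ‖x' - y‖ ^ ((n:ℝ) - α) * ‖x' - y‖ ^ (α - (n:ℝ)) = 1 := by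
      rw [← Real.rpow_add hd, show (n:ℝ) - α + (α - (n:ℝ)) = 0 by ring, Real.rpow_zero]
    calc ‖x' - y‖ ^ ((n:ℝ) - α) / ‖x' - x''‖ ^ (1:ℝ) *
          ‖((inner ℝ (x' - y) (ν y) : ℝ) : ℂ) / ((‖T.symm (x' - y)‖ ^ n : ℝ) : ℂ) -
            ((inner ℝ (x'' - y) (ν y) : ℝ) : ℂ) / ((‖T.symm (x'' - y)‖ ^ n : ℝ) : ℂ)‖
        ≤ ‖x' - y‖ ^ ((n:ℝ) - α) / ‖x' - x''‖ ^ (1:ℝ) *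
            (C₂ * ‖x' - x''‖ * ‖x' - y‖ ^ (α - (n:ℝ))) :=
          mul_le_mul_of_nonneg_left (H₂ x' hx' x'' hx'' hne y hy hsep) (by positivity)
      _ = C₂ := by
          rw [Real.rpow_one]
          field_simp
          exact e1
  have hb2b : BddAbove (kSet2 (frontier Ω) (frontier Ω) ((n:ℝ) - 1) α
      (fun x y => ((inner ℝ (x - y) (ν y) : ℝ) : ℂ) / ((‖T.symm (x - y)‖ ^ n : ℝ) : ℂ))) := by
    refine ⟨C₂, ?_⟩
    rintro c ⟨x', hx', x'', hx'', hne, y, hy, hsep, rfl⟩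
    have ht : (0:ℝ) < ‖x' - x''‖ := norm_pos_iff.mpr (sub_ne_zero.mpr hne)
    have hd : (0:ℝ) < ‖x' - y‖ := lt_of_lt_of_le (by linarith) hsep
    have htd : ‖x' - x''‖ ≤ ‖x' - y‖ := by linarith
    have e1 : ‖x' - x''‖ / ‖x' - x''‖ ^ α = ‖x' - x''‖ ^ (1 - α) := by
      rw [Real.rpow_sub ht, Real.rpow_one]
    have e2 : ‖x' - x''‖ ^ (1 - α) ≤ ‖x' - y‖ ^ (1 - α) :=
      Real.rpow_le_rpow ht.le htd (by linarith [hα.2])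
    have e3 : ‖x' - y‖ ^ ((n:ℝ) - 1) * ‖x' - y‖ ^ (α - (n:ℝ)) = ‖x' - y‖ ^ (α - 1) := by
      rw [← Real.rpow_add hd]; congr 1; ring
    have e4 : ‖x' - y‖ ^ (1 - α) * ‖x' - y‖ ^ (α - 1) = 1 := by
      rw [← Real.rpow_add hd, show (1:ℝ) - α + (α - 1) = 0 by ring, Real.rpow_zero]
    calc ‖x' - y‖ ^ ((n:ℝ) - 1) / ‖x' - x''‖ ^ α *
          ‖((inner ℝ (x' - y) (ν y) : ℝ) : ℂ) / ((‖T.symm (x' - y)‖ ^ n : ℝ) : ℂ) -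
            ((inner ℝ (x'' - y) (ν y) : ℝ) : ℂ) / ((‖T.symm (x'' - y)‖ ^ n : ℝ) : ℂ)‖
        ≤ ‖x' - y‖ ^ ((n:ℝ) - 1) / ‖x' - x''‖ ^ α *
            (C₂ * ‖x' - x''‖ * ‖x' - y‖ ^ (α - (n:ℝ))) :=
          mul_le_mul_of_nonneg_left (H₂ x' hx' x'' hx'' hne y hy hsep) (by positivity)
      _ = C₂ * (‖x' - x''‖ / ‖x' - x''‖ ^ α) * (‖x' - y‖ ^ ((n:ℝ) - 1) * ‖x' - y‖ ^ (α - (n:ℝ))) := by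
          ring
      _ = C₂ * ‖x' - x''‖ ^ (1 - α) * ‖x' - y‖ ^ (α - 1) := by rw [e1, e3]
      _ ≤ C₂ * ‖x' - y‖ ^ (1 - α) * ‖x' - y‖ ^ (α - 1) := by
          apply mul_le_mul_of_nonneg_right _ (by positivity)
          exact mul_le_mul_of_nonneg_left e2 hC₂.le
      _ = C₂ * (‖x' - y‖ ^ (1 - α) * ‖x' - y‖ ^ (α - 1)) := by ring
      _ = C₂ := by rw [e4, mul_one]
  exact ⟨⟨hcont, hb1, hb2a⟩, ⟨hcont, hb1, hb2b⟩⟩
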